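/- Let 2 ≤ p ≤ q and n = p + q, and let 𝒬 be the quadratic form 𝒬(v) = vᵀQ_{p,q}v on ℝⁿ. Let V₁, …, V_r ⊂ ℝⁿ be hyperplanes with V_i ≠ V₁ for all i ≥ 2, and suppose that ℝⁿ = V₁ ⊕ L₁, where L₁ is the 𝒬-orthogonal complement of V₁, and that L₁ is spanned by a vector w with 𝒬(w) > 0. Then there exists v₁ ∈ V₁ with 𝒬(v₁) < 0 such that for every i ∈ {2, …, r} and every nonzero vector v in span(v₁, w) ∩ V_i one has 𝒬(v) > 0. -/

import Mathlib

open Matrix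

/-- The matrix `Q_{p,q} = diag(−Id_p, Id_q)` on `ℝ^{p+q}`. -/
noncomputable def Qpq (p q : ℕ) : Matrix (Fin (p + q)) (Fin (p + q)) ℝ :=
  Matrix.diagonal (fun i => if (i : ℕ) < p then -1 else 1)

section QpqAux

variable (p q : ℕ)

lemma Qpq_sum (x y : Fin (p + q) → ℝ) :
    x ⬝ᵥ Qpq p q *ᵥ y = ∑ i : Fin (p + q), (if (i : ℕ) < p then (-1 : ℝ) else 1) * x i * y i := by
  simp only [Qpq, dotProduct, mulVec_diagonal]
  exact Finset.sum_congr rfl fun i _ => by ring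

lemma Qpq_symm (x y : Fin (p + q) → ℝ) :
    x ⬝ᵥ Qpq p q *ᵥ y = y ⬝ᵥ Qpq p q *ᵥ x := by
  rw [Qpq_sum, Qpq_sum]
  exact Finset.sum_congr rfl fun i _ => by ring

lemma Qpq_expandAB (a b : ℝ) (x y : Fin (p + q) → ℝ) :
    (a • x + b • y) ⬝ᵥ Qpq p q *ᵥ (a • x + b • y) =
      a ^ 2 * (x ⬝ᵥ Qpq p q *ᵥ x) + 2 * a * b * (x ⬝ᵥ Qpq p q *ᵥ y)
        + b ^ 2 * (y ⬝ᵥ Qpq p q *ᵥ y) := by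
  simp only [Matrix.mulVec_add, Matrix.mulVec_smul, dotProduct_add, dotProduct_smul,
    add_dotProduct, smul_dotProduct, smul_eq_mul]
  rw [Qpq_symm p q y x]
  ring

lemma Qpq_expand1 (c : ℝ) (x y : Fin (p + q) → ℝ) :
    (x + c • y) ⬝ᵥ Qpq p q *ᵥ (x + c • y) =
      (x ⬝ᵥ Qpq p q *ᵥ x) + 2 * c * (x ⬝ᵥ Qpq p q *ᵥ y) + c ^ 2 * (y ⬝ᵥ Qpq p q *ᵥ y) := by
  have := Qpq_expandAB p q 1 c x y
  simpa using this

lemma Qpq_expand_add (x y : Fin (p + q) → ℝ) :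
    (x + y) ⬝ᵥ Qpq p q *ᵥ (x + y) =
      (x ⬝ᵥ Qpq p q *ᵥ x) + 2 * (x ⬝ᵥ Qpq p q *ᵥ y) + (y ⬝ᵥ Qpq p q *ᵥ y) := by
  have := Qpq_expand1 p q 1 x y
  simpa using this

lemma Qpq_expand3 (a b : ℝ) (x y z : Fin (p + q) → ℝ) :
    (x + a • y + b • z) ⬝ᵥ Qpq p q *ᵥ (x + a • y + b • z) =
      (x ⬝ᵥ Qpq p q *ᵥ x) + a ^ 2 * (y ⬝ᵥ Qpq p q *ᵥ y) + b ^ 2 * (z ⬝ᵥ Qpq p q *ᵥ z)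
        + 2 * a * (x ⬝ᵥ Qpq p q *ᵥ y) + 2 * b * (x ⬝ᵥ Qpq p q *ᵥ z)
        + 2 * a * b * (y ⬝ᵥ Qpq p q *ᵥ z) := by
  simp only [Matrix.mulVec_add, Matrix.mulVec_smul, dotProduct_add, dotProduct_smul,
    add_dotProduct, smul_dotProduct, smul_eq_mul]
  rw [Qpq_symm p q y x, Qpq_symm p q z x, Qpq_symm p q z y]
  ring

lemma Qpq_single (i : Fin (p + q)) :
    (Pi.single i 1 : Fin (p + q) → ℝ) ⬝ᵥ Qpq p q *ᵥ (Pi.single i 1) =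
      if (i : ℕ) < p then -1 else 1 := by
  rw [Qpq_sum]
  rw [Finset.sum_eq_single i]
  · simp
  · intro j _ hj; simp [Pi.single_apply, hj]
  · simp

lemma Qpq_single_ne {i j : Fin (p + q)} (hij : i ≠ j) :
    (Pi.single i 1 : Fin (p + q) → ℝ) ⬝ᵥ Qpq p q *ᵥ (Pi.single j 1) = 0 := by
  rw [Qpq_sum]
  apply Finset.sum_eq_zero
  intro k _
  simp only [Pi.single_apply]
  split_ifs with h1 h2 h3 h4 h5 <;> simp_all

end QpqAux

/-- roots of a real quadratic with `a*c < 0` -/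
lemma quad_roots (a b c : ℝ) (h : a * c < 0) :
    ∃ t₀ t₁ : ℝ, t₀ ≠ t₁ ∧ a * t₀ ^ 2 + 2 * b * t₀ + c = 0 ∧
      a * t₁ ^ 2 + 2 * b * t₁ + c = 0 := by
  have ha : a ≠ 0 := fun h' => by simp [h'] at h
  have hdisc : 0 < b ^ 2 - a * c := by nlinarith [sq_nonneg b]
  set s := Real.sqrt (b ^ 2 - a * c) with hs
  have hs2 : s ^ 2 = b ^ 2 - a * c := Real.sq_sqrt hdisc.le
  have hspos : 0 < s := Real.sqrt_pos.mpr hdisc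
  refine ⟨(-b - s) / a, (-b + s) / a, ?_, ?_, ?_⟩
  · intro h'
    rw [div_eq_div_iff ha ha] at h'
    ring_nf at h'
    have hsa : s * a = 0 := by linarith
    rcases mul_eq_zero.mp hsa with h0 | h0
    · exact absurd h0 hspos.ne'
    · exact ha h0
  · field_simp
    nlinarith [hs2]
  · field_simp
    nlinarith [hs2]

/-- a nonzero real quadratic has finitely many roots -/
lemma quad_finite (a b c : ℝ) (h : ¬(a = 0 ∧ b = 0 ∧ c = 0)) :
    {t : ℝ | a * t ^ 2 + b * t + c = 0}.Finite := by
  classical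
  set P : Polynomial ℝ := Polynomial.C a * Polynomial.X ^ 2 + Polynomial.C b * Polynomial.X
    + Polynomial.C c with hP
  have hPne : P ≠ 0 := by
    intro h0
    apply h
    have h2 := congrArg (fun Q => Polynomial.coeff Q 2) h0
    have h1 := congrArg (fun Q => Polynomial.coeff Q 1) h0
    have hc := congrArg (fun Q => Polynomial.coeff Q 0) h0
    simp [hP, Polynomial.coeff_add, Polynomial.coeff_C, Polynomial.coeff_C_mul,
      Polynomial.coeff_X_pow, Polynomial.coeff_X] at h2 h1 hc
    exact ⟨h2, h1, hc⟩
  have : {t : ℝ | a * t ^ 2 + b * t + c = 0} = {t : ℝ | P.IsRoot t} := by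
    ext t
    simp [hP, Polynomial.IsRoot, Polynomial.eval_add, Polynomial.eval_mul]
  rw [this]
  exact Polynomial.finite_setOf_isRoot hPne

/-- a subspace of `ℝⁿ` of codimension 1 is the kernel of a linear functional -/
lemma exists_ker_eq {n : ℕ} (hn : 0 < n) (U : Submodule ℝ (Fin n → ℝ))
    (hU : Module.finrank ℝ U = n - 1) :
    ∃ f : (Fin n → ℝ) →ₗ[ℝ] ℝ, LinearMap.ker f = U := by
  have hq : Module.finrank ℝ ((Fin n → ℝ) ⧸ U) = 1 := by
    have := Submodule.finrank_quotient_add_finrank U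
    rw [hU, Module.finrank_fin_fun] at this
    omega
  obtain ⟨e⟩ := FiniteDimensional.nonempty_linearEquiv_of_finrank_eq
    (hq.trans (Module.finrank_self ℝ).symm)
  refine ⟨e.toLinearMap ∘ₗ U.mkQ, ?_⟩
  rw [LinearMap.ker_comp, LinearEquiv.ker, Submodule.comap_bot, Submodule.ker_mkQ]

/-- null vectors of `Qpq` lying in `W` span `W` whenever `W` contains a negative and a
positive vector -/
lemma Qpq_null_span (p q : ℕ) (W : Submodule ℝ (Fin (p + q) → ℝ)) (u x : Fin (p + q) → ℝ)
    (hu : u ∈ W) (hx : x ∈ W) (hQu : u ⬝ᵥ Qpq p q *ᵥ u < 0) (hQx : 0 < x ⬝ᵥ Qpq p q *ᵥ x) :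
    W ≤ Submodule.span ℝ {z | z ∈ W ∧ z ⬝ᵥ Qpq p q *ᵥ z = 0} := by
  have key : ∀ y v' : Fin (p + q) → ℝ, y ∈ W → v' ∈ W →
      (y ⬝ᵥ Qpq p q *ᵥ y) * (v' ⬝ᵥ Qpq p q *ᵥ v') < 0 →
      v' ∈ Submodule.span ℝ {z | z ∈ W ∧ z ⬝ᵥ Qpq p q *ᵥ z = 0} := by
    intro y v' hy hv' hprod
    obtain ⟨t₀, t₁, htne, h₀, h₁⟩ :=
      quad_roots (y ⬝ᵥ Qpq p q *ᵥ y) (v' ⬝ᵥ Qpq p q *ᵥ y) (v' ⬝ᵥ Qpq p q *ᵥ v') hprod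
    have hz : ∀ t : ℝ, (y ⬝ᵥ Qpq p q *ᵥ y) * t ^ 2 + 2 * (v' ⬝ᵥ Qpq p q *ᵥ y) * t
        + (v' ⬝ᵥ Qpq p q *ᵥ v') = 0 →
        v' + t • y ∈ {z | z ∈ W ∧ z ⬝ᵥ Qpq p q *ᵥ z = 0} := by
      intro t ht
      refine ⟨W.add_mem hv' (W.smul_mem t hy), ?_⟩
      rw [Qpq_expand1]
      linear_combination ht
    have hd : t₁ - t₀ ≠ 0 := sub_ne_zero.mpr (Ne.symm htne)
    have e1 : t₁ / (t₁ - t₀) + -t₀ / (t₁ - t₀) = 1 := by field_simp <;> ring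
    have e2 : t₁ / (t₁ - t₀) * t₀ + -t₀ / (t₁ - t₀) * t₁ = 0 := by field_simp <;> ring
    have hv'' : v' = (t₁ / (t₁ - t₀)) • (v' + t₀ • y) + (-t₀ / (t₁ - t₀)) • (v' + t₁ • y) := by
      have expand : (t₁ / (t₁ - t₀)) • (v' + t₀ • y) + (-t₀ / (t₁ - t₀)) • (v' + t₁ • y)
          = (t₁ / (t₁ - t₀) + -t₀ / (t₁ - t₀)) • v'
            + (t₁ / (t₁ - t₀) * t₀ + -t₀ / (t₁ - t₀) * t₁) • y := by
        rw [smul_add, smul_add, smul_smul, smul_smul, add_smul, add_smul]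
        abel
      rw [expand, e1, e2, one_smul, zero_smul, add_zero]
    rw [hv'']
    exact Submodule.add_mem _
      (Submodule.smul_mem _ _ (Submodule.subset_span (hz t₀ h₀)))
      (Submodule.smul_mem _ _ (Submodule.subset_span (hz t₁ h₁)))
  intro v hv
  rcases lt_trichotomy (v ⬝ᵥ Qpq p q *ᵥ v) 0 with hvv | hvv | hvv
  · exact key x v hx hv (mul_neg_of_pos_of_neg hQx hvv)
  · exact Submodule.subset_span ⟨hv, hvv⟩
  · exact key u v hu hv (mul_neg_of_neg_of_pos hQu hvv)

set_option maxHeartbeats 2000000 in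
theorem exists_good_negative_vector (p q r : ℕ) (hp : 2 ≤ p) (hpq : p ≤ q) (hr : 1 ≤ r)
    (V : Fin r → Submodule ℝ (Fin (p + q) → ℝ))
    (hVdim : ∀ i, Module.finrank ℝ (V i) = p + q - 1)
    (hne : ∀ i : Fin r, i ≠ ⟨0, hr⟩ → V i ≠ V ⟨0, hr⟩)
    (L : Submodule ℝ (Fin (p + q) → ℝ))
    (hL : ∀ x, x ∈ L ↔ ∀ v ∈ V ⟨0, hr⟩, v ⬝ᵥ (Qpq p q) *ᵥ x = 0)
    (hcompl : IsCompl (V ⟨0, hr⟩) L)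
    (w : Fin (p + q) → ℝ) (hw : L = Submodule.span ℝ {w})
    (hwpos : 0 < w ⬝ᵥ (Qpq p q) *ᵥ w) :
    ∃ v₁ ∈ V ⟨0, hr⟩, v₁ ⬝ᵥ (Qpq p q) *ᵥ v₁ < 0 ∧
      ∀ i : Fin r, i ≠ ⟨0, hr⟩ →
        ∀ v ∈ Submodule.span ℝ {v₁, w} ⊓ V i, v ≠ 0 → 0 < v ⬝ᵥ (Qpq p q) *ᵥ v := by
  classical
  set i₀ : Fin r := ⟨0, hr⟩ with hi₀
  -- basic facts about w
  have hwL : w ∈ L := by rw [hw]; exact Submodule.mem_span_singleton_self w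
  have horth : ∀ v ∈ V i₀, v ⬝ᵥ Qpq p q *ᵥ w = 0 := fun v hv => (hL w).mp hwL v hv
  -- linear functionals cutting out the hyperplanes
  have hffull : ∀ i : Fin r, ∃ f : (Fin (p + q) → ℝ) →ₗ[ℝ] ℝ, LinearMap.ker f = V i :=
    fun i => exists_ker_eq (by omega) (V i) (hVdim i)
  choose f hker using hffull
  have hfV1 : ∀ i : Fin r, i ≠ i₀ → ∃ v ∈ V i₀, f i v ≠ 0 := by
    intro i hi
    by_contra hcon
    push_neg at hcon
    have hle : V i₀ ≤ V i := by
      rw [← hker i]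
      exact fun v hv => LinearMap.mem_ker.mpr (hcon v hv)
    have heq : V i₀ = V i :=
      Submodule.eq_of_le_of_finrank_eq hle (by rw [hVdim, hVdim])
    exact hne i hi heq.symm
  -- decomposition along V i₀ ⊕ L
  have hdecomp : ∀ e : Fin (p + q) → ℝ, ∃ a ∈ V i₀, ∃ c : ℝ, e = a + c • w := by
    intro e
    have he : e ∈ V i₀ ⊔ L := by rw [hcompl.sup_eq_top]; trivial
    obtain ⟨a, ha, l, hl, hsum⟩ := Submodule.mem_sup.mp he
    rw [hw] at hl
    obtain ⟨c, hc⟩ := Submodule.mem_span_singleton.mp hl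
    exact ⟨a, ha, c, by rw [← hsum, ← hc]⟩
  have hQdecomp : ∀ a ∈ V i₀, ∀ c : ℝ, (a + c • w) ⬝ᵥ Qpq p q *ᵥ (a + c • w)
      = a ⬝ᵥ Qpq p q *ᵥ a + c ^ 2 * (w ⬝ᵥ Qpq p q *ᵥ w) := by
    intro a ha c
    rw [Qpq_expand1, horth a ha]
    ring
  -- a negative vector in V i₀
  have hneg : ∃ u ∈ V i₀, u ⬝ᵥ Qpq p q *ᵥ u < 0 := by
    obtain ⟨a, ha, c, hc⟩ := hdecomp (Pi.single ⟨0, by omega⟩ 1)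
    refine ⟨a, ha, ?_⟩
    have h1 : (Pi.single (⟨0, by omega⟩ : Fin (p + q)) 1 : Fin (p + q) → ℝ) ⬝ᵥ Qpq p q *ᵥ
        (Pi.single ⟨0, by omega⟩ 1) = -1 := by
      rw [Qpq_single]
      simp only [Fin.val_mk]
      rw [if_pos (by omega)]
    have h2 := hQdecomp a ha c
    rw [← hc, h1] at h2
    nlinarith [sq_nonneg c, hwpos]
  -- a positive vector in V i₀
  have hpos : ∃ x ∈ V i₀, 0 < x ⬝ᵥ Qpq p q *ᵥ x := by
    have hj1 : p < p + q := by omega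
    have hj2 : p + 1 < p + q := by omega
    set j₁ : Fin (p + q) := ⟨p, hj1⟩ with hj₁def
    set j₂ : Fin (p + q) := ⟨p + 1, hj2⟩ with hj₂def
    have hQ1 : (Pi.single j₁ 1 : Fin (p + q) → ℝ) ⬝ᵥ Qpq p q *ᵥ (Pi.single j₁ 1) = 1 := by
      rw [Qpq_single]; simp only [hj₁def, Fin.val_mk]; rw [if_neg (by omega)]
    have hQ2 : (Pi.single j₂ 1 : Fin (p + q) → ℝ) ⬝ᵥ Qpq p q *ᵥ (Pi.single j₂ 1) = 1 := by
      rw [Qpq_single]; simp only [hj₂def, Fin.val_mk]; rw [if_neg (by omega)]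
    have hQ12 : (Pi.single j₁ 1 : Fin (p + q) → ℝ) ⬝ᵥ Qpq p q *ᵥ (Pi.single j₂ 1) = 0 :=
      Qpq_single_ne p q (by simp [hj₁def, hj₂def, Fin.ext_iff])
    obtain ⟨a₁, ha₁, c₁, hc₁⟩ := hdecomp (Pi.single j₁ 1)
    obtain ⟨a₂, ha₂, c₂, hc₂⟩ := hdecomp (Pi.single j₂ 1)
    by_cases h10 : c₁ = 0
    · refine ⟨a₁, ha₁, ?_⟩
      have : a₁ = Pi.single j₁ 1 := by rw [hc₁, h10]; simp
      rw [this, hQ1]; norm_num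
    · refine ⟨c₂ • a₁ + (-c₁) • a₂, Submodule.add_mem _ (Submodule.smul_mem _ _ ha₁)
        (Submodule.smul_mem _ _ ha₂), ?_⟩
      have e1 : a₁ = Pi.single j₁ 1 - c₁ • w := eq_sub_iff_add_eq.mpr hc₁.symm
      have e2 : a₂ = Pi.single j₂ 1 - c₂ • w := eq_sub_iff_add_eq.mpr hc₂.symm
      have hx : c₂ • a₁ + (-c₁) • a₂
          = c₂ • (Pi.single j₁ 1 : Fin (p + q) → ℝ) + (-c₁) • (Pi.single j₂ 1 : Fin (p + q) → ℝ) := by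
        rw [e1, e2]
        module
      rw [hx, Qpq_expandAB, hQ1, hQ2, hQ12]
      have hc1sq : 0 < c₁ ^ 2 := by positivity
      nlinarith [sq_nonneg c₂]
  obtain ⟨u, huW, hQu⟩ := hneg
  obtain ⟨x, hxW, hQx⟩ := hpos
  have hspan := Qpq_null_span p q (V i₀) u x huW hxW hQu hQx
  -- any functional not vanishing on V i₀ is nonzero at some null vector of V i₀
  have null_f : ∀ g : (Fin (p + q) → ℝ) →ₗ[ℝ] ℝ, (∃ v ∈ V i₀, g v ≠ 0) →
      ∃ z ∈ V i₀, z ⬝ᵥ Qpq p q *ᵥ z = 0 ∧ g z ≠ 0 := by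
    rintro g ⟨v, hv, hgv⟩
    by_contra hcon
    push_neg at hcon
    have hle : V i₀ ≤ LinearMap.ker g :=
      le_trans hspan (Submodule.span_le.mpr
        (fun z hz => LinearMap.mem_ker.mpr (hcon z hz.1 hz.2)))
    exact hgv (hle hv)
  -- crux: a null vector of V i₀ avoiding finitely many hyperplanes
  have crux : ∀ s : Finset (Fin r), (∀ i ∈ s, i ≠ i₀) →
      ∃ z ∈ V i₀, z ⬝ᵥ Qpq p q *ᵥ z = 0 ∧ ∀ i ∈ s, f i z ≠ 0 := by
    intro s
    induction s using Finset.induction_on with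
    | empty =>
      intro _
      obtain ⟨t₀, t₁, htne, h₀, h₁⟩ :=
        quad_roots (x ⬝ᵥ Qpq p q *ᵥ x) (u ⬝ᵥ Qpq p q *ᵥ x) (u ⬝ᵥ Qpq p q *ᵥ u)
          (mul_neg_of_pos_of_neg hQx hQu)
      exact ⟨u + t₀ • x, Submodule.add_mem _ huW (Submodule.smul_mem _ _ hxW),
        by rw [Qpq_expand1]; linear_combination h₀, by simp⟩
    | @insert j s hjs ih =>
      intro hall
      have hjne : j ≠ i₀ := hall j (Finset.mem_insert_self j s)
      obtain ⟨z, hzW, hz0, hzs⟩ := ih (fun i hi => hall i (Finset.mem_insert_of_mem hi))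
      by_cases hjz : f j z ≠ 0
      · exact ⟨z, hzW, hz0, fun i hi => (Finset.mem_insert.mp hi).elim
          (fun h => h ▸ hjz) (fun h => hzs i h)⟩
      push_neg at hjz
      obtain ⟨z', hz'W, hz'0, hjz'⟩ := null_f (f j) (hfV1 j hjne)
      by_cases hβ : z ⬝ᵥ Qpq p q *ᵥ z' = 0
      · -- the pencil z + λ z' consists of null vectors
        have hfin : ∀ i ∈ insert j s,
            {t : ℝ | 0 * t ^ 2 + (f i z') * t + f i z = 0}.Finite := by
          intro i hi
          apply quad_finite
          rintro ⟨-, h1, h2⟩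
          rcases Finset.mem_insert.mp hi with rfl | hi'
          · exact hjz' h1
          · exact hzs i hi' h2
        have hfinU : (⋃ i ∈ (insert j s : Finset (Fin r)),
            {t : ℝ | 0 * t ^ 2 + (f i z') * t + f i z = 0}).Finite :=
          Set.Finite.biUnion (Finset.finite_toSet _) (fun i hi => hfin i hi)
        obtain ⟨lam, hlam⟩ := hfinU.infinite_compl.nonempty
        refine ⟨z + lam • z', Submodule.add_mem _ hzW (Submodule.smul_mem _ _ hz'W), ?_, ?_⟩
        · rw [Qpq_expand1, hz0, hβ, hz'0]; ring
        · intro i hi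
          have hnot : lam ∉ {t : ℝ | 0 * t ^ 2 + (f i z') * t + f i z = 0} :=
            fun hmem => hlam (Set.mem_biUnion hi hmem)
          simp only [Set.mem_setOf_eq] at hnot
          rw [map_add, _root_.map_smul, smul_eq_mul]
          intro h0
          exact hnot (by linear_combination h0)
      · -- hyperbolic case: get an anisotropic vector orthogonal to z, z'
        have hy : ∃ y ∈ V i₀, y ⬝ᵥ Qpq p q *ᵥ z = 0 ∧ y ⬝ᵥ Qpq p q *ᵥ z' = 0 ∧
            y ⬝ᵥ Qpq p q *ᵥ y ≠ 0 := by
          by_contra hcon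
          push_neg at hcon
          have hpol : ∀ y y' : Fin (p + q) → ℝ, y ∈ V i₀ → y' ∈ V i₀ →
              y ⬝ᵥ Qpq p q *ᵥ z = 0 → y ⬝ᵥ Qpq p q *ᵥ z' = 0 →
              y' ⬝ᵥ Qpq p q *ᵥ z = 0 → y' ⬝ᵥ Qpq p q *ᵥ z' = 0 →
              y ⬝ᵥ Qpq p q *ᵥ y' = 0 := by
            intro y y' hy hy' a1 a2 b1 b2
            have h1 := hcon y hy a1 a2
            have h2 := hcon y' hy' b1 b2
            have h3 := hcon (y + y') (Submodule.add_mem _ hy hy')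
              (by rw [add_dotProduct, a1, b1]; ring)
              (by rw [add_dotProduct, a2, b2]; ring)
            rw [Qpq_expand_add, h1, h2] at h3
            linarith
          set β := z ⬝ᵥ Qpq p q *ᵥ z' with hβdef
          have hz'z : z' ⬝ᵥ Qpq p q *ᵥ z = β := by rw [Qpq_symm]
          have hKdec : ∀ v ∈ V i₀, ∃ k ∈ V i₀, k ⬝ᵥ Qpq p q *ᵥ z = 0 ∧
              k ⬝ᵥ Qpq p q *ᵥ z' = 0 ∧
              v = k + ((v ⬝ᵥ Qpq p q *ᵥ z') / β) • z + ((v ⬝ᵥ Qpq p q *ᵥ z) / β) • z' := by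
            intro v hv
            refine ⟨v + (-( (v ⬝ᵥ Qpq p q *ᵥ z') / β)) • z + (-((v ⬝ᵥ Qpq p q *ᵥ z) / β)) • z',
              Submodule.add_mem _ (Submodule.add_mem _ hv (Submodule.smul_mem _ _ hzW))
                (Submodule.smul_mem _ _ hz'W), ?_, ?_, ?_⟩
            · rw [add_dotProduct, add_dotProduct, smul_dotProduct, smul_dotProduct,
                smul_eq_mul, smul_eq_mul, hz0, hz'z]
              field_simp
              ring
            · rw [add_dotProduct, add_dotProduct, smul_dotProduct, smul_dotProduct,
                smul_eq_mul, smul_eq_mul, hz'0, ← hβdef]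
              field_simp
              ring
            · simp only [neg_smul]
              abel
          have hK0 : ∀ y : Fin (p + q) → ℝ, y ∈ V i₀ → y ⬝ᵥ Qpq p q *ᵥ z = 0 →
              y ⬝ᵥ Qpq p q *ᵥ z' = 0 → y = 0 := by
            intro y hy a1 a2
            have hyL : y ∈ L := by
              rw [hL]
              intro v hv
              obtain ⟨k, hk, k1, k2, hdec⟩ := hKdec v hv
              have hky : k ⬝ᵥ Qpq p q *ᵥ y = 0 := hpol k y hk hy k1 k2 a1 a2
              have hzy : z ⬝ᵥ Qpq p q *ᵥ y = 0 := by rw [Qpq_symm]; exact a1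
              have hz'y : z' ⬝ᵥ Qpq p q *ᵥ y = 0 := by rw [Qpq_symm]; exact a2
              rw [hdec, add_dotProduct, add_dotProduct, smul_dotProduct, smul_dotProduct,
                smul_eq_mul, smul_eq_mul, hky, hzy, hz'y]
              ring
            exact Submodule.disjoint_def.mp hcompl.disjoint y hy hyL
          -- dimension contradiction
          let g1 : (Fin (p + q) → ℝ) →ₗ[ℝ] ℝ :=
            { toFun := fun y => y ⬝ᵥ Qpq p q *ᵥ z
              map_add' := fun a b => add_dotProduct a b _
              map_smul' := fun c a => by
                simpa using smul_dotProduct c a (Qpq p q *ᵥ z) }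
          let g2 : (Fin (p + q) → ℝ) →ₗ[ℝ] ℝ :=
            { toFun := fun y => y ⬝ᵥ Qpq p q *ᵥ z'
              map_add' := fun a b => add_dotProduct a b _
              map_smul' := fun c a => by
                simpa using smul_dotProduct c a (Qpq p q *ᵥ z') }
          let φ : (V i₀) →ₗ[ℝ] ℝ × ℝ := (g1.prod g2).comp (V i₀).subtype
          have hinj : Function.Injective φ := by
            rw [injective_iff_map_eq_zero]
            intro y hy0
            have h12 : g1 (y : Fin (p + q) → ℝ) = 0 ∧ g2 (y : Fin (p + q) → ℝ) = 0 := by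
              have := Prod.ext_iff.mp hy0
              exact ⟨this.1, this.2⟩
            exact Subtype.ext (hK0 y y.2 h12.1 h12.2)
          have hle := LinearMap.finrank_le_finrank_of_injective hinj
          have h2 : Module.finrank ℝ (ℝ × ℝ) = 2 := by
            rw [Module.finrank_prod, Module.finrank_self]
          rw [hVdim, h2] at hle
          omega
        obtain ⟨y, hyW, hy1, hy2, hyc⟩ := hy
        set c := y ⬝ᵥ Qpq p q *ᵥ y with hcdef
        set β := z ⬝ᵥ Qpq p q *ᵥ z' with hβdef
        have hfin : ∀ i ∈ insert j s,
            {μ : ℝ | (-(c * f i z') / (2 * β)) * μ ^ 2 + (f i y) * μ + f i z = 0}.Finite := by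
          intro i hi
          apply quad_finite
          rintro ⟨h1, h2, h3⟩
          rcases Finset.mem_insert.mp hi with rfl | hi'
          · rw [div_eq_zero_iff] at h1
            rcases h1 with h1 | h1
            · rcases mul_eq_zero.mp (neg_eq_zero.mp h1) with h | h
              · exact hyc h
              · exact hjz' h
            · have : β = 0 := by linarith
              exact hβ this
          · exact hzs i hi' h3
        have hfinU : (⋃ i ∈ (insert j s : Finset (Fin r)),
            {μ : ℝ | (-(c * f i z') / (2 * β)) * μ ^ 2 + (f i y) * μ + f i z = 0}).Finite :=
          Set.Finite.biUnion (Finset.finite_toSet _) (fun i hi => hfin i hi)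
        obtain ⟨μ, hμ⟩ := hfinU.infinite_compl.nonempty
        refine ⟨z + (-(μ ^ 2 * c) / (2 * β)) • z' + μ • y,
          Submodule.add_mem _ (Submodule.add_mem _ hzW (Submodule.smul_mem _ _ hz'W))
            (Submodule.smul_mem _ _ hyW), ?_, ?_⟩
        · rw [Qpq_expand3, hz0, hz'0, ← hcdef, ← hβdef,
            show z ⬝ᵥ Qpq p q *ᵥ y = 0 by rw [Qpq_symm]; exact hy1,
            show z' ⬝ᵥ Qpq p q *ᵥ y = 0 by rw [Qpq_symm]; exact hy2]
          field_simp
          ring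
        · intro i hi
          have hnot : μ ∉ {μ : ℝ | (-(c * f i z') / (2 * β)) * μ ^ 2 + (f i y) * μ
              + f i z = 0} := fun hmem => hμ (Set.mem_biUnion hi hmem)
          simp only [Set.mem_setOf_eq] at hnot
          rw [map_add, map_add, _root_.map_smul, _root_.map_smul, smul_eq_mul, smul_eq_mul]
          intro h0
          apply hnot
          field_simp at h0 ⊢
          linear_combination h0
  -- apply the crux to all hyperplanes
  obtain ⟨z, hzW, hz0, hzs⟩ := crux (Finset.univ.filter (· ≠ i₀))
    (fun i hi => (Finset.mem_filter.mp hi).2)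
  have hfz : ∀ i : Fin r, i ≠ i₀ → f i z ≠ 0 :=
    fun i hi => hzs i (Finset.mem_filter.mpr ⟨Finset.mem_univ _, hi⟩)
  -- perturb z into the negative cone
  set b := z ⬝ᵥ Qpq p q *ᵥ u with hbdef
  set σ : ℝ := if 0 ≤ b then -1 else 1 with hσdef
  have hQneg : ∀ t : ℝ, 0 < t →
      (z + (σ * t) • u) ⬝ᵥ Qpq p q *ᵥ (z + (σ * t) • u) < 0 := by
    intro t ht
    rw [Qpq_expand1, hz0, ← hbdef]
    rcases le_or_gt 0 b with hb | hb
    · rw [hσdef, if_pos hb]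
      have h1 : 0 ≤ t * b := mul_nonneg ht.le hb
      nlinarith [mul_pos ht ht]
    · rw [hσdef, if_neg (not_le.mpr hb)]
      have h1 : t * b < 0 := mul_neg_of_pos_of_neg ht hb
      nlinarith [mul_pos ht ht]
  -- choose t > 0 small so that all quadratic-form conditions hold
  have hev : ∀ᶠ t in nhds (0 : ℝ), ∀ i ∈ Finset.univ.filter (· ≠ i₀),
      0 < (f i z + σ * t * f i u) ^ 2 * (w ⬝ᵥ Qpq p q *ᵥ w)
        + (f i w) ^ 2 * (2 * (σ * t) * b + (σ * t) ^ 2 * (u ⬝ᵥ Qpq p q *ᵥ u)) := by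
    rw [Filter.eventually_all_finset]
    intro i hi
    have hine : i ≠ i₀ := (Finset.mem_filter.mp hi).2
    have hcont : Continuous (fun t : ℝ => (f i z + σ * t * f i u) ^ 2 * (w ⬝ᵥ Qpq p q *ᵥ w)
        + (f i w) ^ 2 * (2 * (σ * t) * b + (σ * t) ^ 2 * (u ⬝ᵥ Qpq p q *ᵥ u))) := by
      fun_prop
    have h0 : (0 : ℝ) < (f i z + σ * 0 * f i u) ^ 2 * (w ⬝ᵥ Qpq p q *ᵥ w)
        + (f i w) ^ 2 * (2 * (σ * 0) * b + (σ * 0) ^ 2 * (u ⬝ᵥ Qpq p q *ᵥ u)) := by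
      have hfzi := hfz i hine
      have : (0:ℝ) < (f i z) ^ 2 * (w ⬝ᵥ Qpq p q *ᵥ w) := by positivity
      calc (0:ℝ) < (f i z) ^ 2 * (w ⬝ᵥ Qpq p q *ᵥ w) := this
        _ = _ := by ring
    exact (hcont.tendsto 0).eventually (eventually_gt_nhds h0)
  obtain ⟨δ, hδpos, hδ⟩ := Metric.eventually_nhds_iff.mp hev
  have ht : (0 : ℝ) < δ / 2 := by linarith
  have htd : dist (δ / 2) (0 : ℝ) < δ := by
    rw [Real.dist_eq, sub_zero, abs_of_pos ht]; linarith
  set ε : ℝ := σ * (δ / 2) with hεdef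
  set v₁ := z + ε • u with hv₁def
  have hv₁W : v₁ ∈ V i₀ := Submodule.add_mem _ hzW (Submodule.smul_mem _ _ huW)
  have hQv₁ : v₁ ⬝ᵥ Qpq p q *ᵥ v₁ < 0 := hQneg (δ / 2) ht
  have hQv₁w : v₁ ⬝ᵥ Qpq p q *ᵥ w = 0 := horth v₁ hv₁W
  have hfi : ∀ i : Fin r, f i v₁ = f i z + ε * f i u := by
    intro i
    rw [hv₁def, map_add, _root_.map_smul, smul_eq_mul]
  have hQv₁eq : v₁ ⬝ᵥ Qpq p q *ᵥ v₁ = 2 * ε * b + ε ^ 2 * (u ⬝ᵥ Qpq p q *ᵥ u) := by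
    rw [hv₁def, Qpq_expand1, hz0, ← hbdef]; ring
  have hkey : ∀ i : Fin r, i ≠ i₀ →
      0 < (f i v₁) ^ 2 * (w ⬝ᵥ Qpq p q *ᵥ w) + (f i w) ^ 2 * (v₁ ⬝ᵥ Qpq p q *ᵥ v₁) := by
    intro i hi
    have := hδ htd i (Finset.mem_filter.mpr ⟨Finset.mem_univ _, hi⟩)
    rw [hfi i, hQv₁eq, hεdef]
    convert this using 2 <;> ring
  -- conclusion
  refine ⟨v₁, hv₁W, hQv₁, ?_⟩
  intro i hi v hv hvne
  obtain ⟨hvspan, hvVi⟩ := Submodule.mem_inf.mp hv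
  obtain ⟨a, bb, hab⟩ := Submodule.mem_span_pair.mp hvspan
  have hfv : f i v = 0 := by
    rw [← hker i] at hvVi
    exact LinearMap.mem_ker.mp hvVi
  have hlin : a * f i v₁ + bb * f i w = 0 := by
    rw [← hab, map_add, _root_.map_smul, _root_.map_smul, smul_eq_mul, smul_eq_mul] at hfv
    exact hfv
  have hQv : v ⬝ᵥ Qpq p q *ᵥ v = a ^ 2 * (v₁ ⬝ᵥ Qpq p q *ᵥ v₁)
      + bb ^ 2 * (w ⬝ᵥ Qpq p q *ᵥ w) := by
    rw [← hab, Qpq_expandAB, hQv₁w]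
    ring
  have hk := hkey i hi
  by_cases hfw : f i w = 0
  · have hfv₁ : f i v₁ ≠ 0 := by
      intro h0
      rw [h0, hfw] at hk
      simp at hk
    have ha : a = 0 := by
      have : a * f i v₁ = 0 := by rw [hfw] at hlin; linarith
      exact (mul_eq_zero.mp this).resolve_right hfv₁
    have hbb : bb ≠ 0 := by
      intro h0
      apply hvne
      rw [← hab, ha, h0]
      simp
    rw [hQv, ha]
    have hbb2 : 0 < bb ^ 2 := by positivity
    linarith [mul_pos hbb2 hwpos]
  · have ha : a ≠ 0 := by
      intro h0
      have hbb : bb = 0 := by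
        have : bb * f i w = 0 := by rw [h0] at hlin; linarith
        exact (mul_eq_zero.mp this).resolve_right hfw
      apply hvne
      rw [← hab, h0, hbb]
      simp
    have h1 : (v ⬝ᵥ Qpq p q *ᵥ v) * (f i w) ^ 2
        = a ^ 2 * ((f i v₁) ^ 2 * (w ⬝ᵥ Qpq p q *ᵥ w) + (f i w) ^ 2 * (v₁ ⬝ᵥ Qpq p q *ᵥ v₁)) := by
      rw [hQv]
      linear_combination ((w ⬝ᵥ Qpq p q *ᵥ w) * (bb * f i w - a * f i v₁)) * hlin
    have h2 : 0 < (v ⬝ᵥ Qpq p q *ᵥ v) * (f i w) ^ 2 := by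
      rw [h1]
      exact mul_pos (by positivity) hk
    have hfw2 : 0 < (f i w) ^ 2 := by positivity
    nlinarith [h2, hfw2]
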